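/- For λ > 0, λ·∫₀^∞ ∫_{π/3}^{2π/3} e^{-(λ/√3)·r²·sin²φ} · r⁴ dφ dr = ((27·ln 3 + 68)·√(π√3))/(64·λ^{3/2}). -/

import Mathlib

open Real MeasureTheory Set Filter Topology


lemma moment4 {b : ℝ} (hb : 0 < b) :
    ∫ r in Set.Ioi (0:ℝ), Real.exp (-b * r^2) * r^4
      = 3 / (8 * b^2) * Real.sqrt (π / b) := by
  have hint4 : IntegrableOn (fun r : ℝ => Real.exp (-b * r^2) * r^4) (Ioi 0) := by
    have := integrableOn_rpow_mul_exp_neg_mul_sq hb (s := 4) (by norm_num)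
    refine this.congr_fun (fun x hx => ?_) measurableSet_Ioi
    rw [← Real.rpow_natCast x 4]
    ring_nf
  have hint0 : IntegrableOn (fun r : ℝ => Real.exp (-b * r^2)) (Ioi 0) :=
    (integrable_exp_neg_mul_sq hb).integrableOn
  set G : ℝ → ℝ := fun x => -(x^3/(2*b)) * Real.exp (-b*x^2)
      - 3/(4*b^2) * x * Real.exp (-b*x^2) with hG
  have hderiv : ∀ x ∈ Ici (0:ℝ), HasDerivAt G
      (Real.exp (-b * x^2) * x^4 - 3/(4*b^2) * Real.exp (-b * x^2)) x := by
    intro x _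
    have he : HasDerivAt (fun x : ℝ => Real.exp (-b*x^2)) (Real.exp (-b*x^2) * (-b*(2*x))) x := by
      have : HasDerivAt (fun x : ℝ => -b*x^2) (-b*(2*x)) x := by
        simpa using ((hasDerivAt_pow 2 x).const_mul (-b))
      exact this.exp
    have h1 : HasDerivAt (fun x : ℝ => -(x^3/(2*b)) * Real.exp (-b*x^2))
        (-(3*x^2/(2*b)) * Real.exp (-b*x^2) + (-(x^3/(2*b))) * (Real.exp (-b*x^2) * (-b*(2*x)))) x := by
      have hp : HasDerivAt (fun x : ℝ => -(x^3/(2*b))) (-(3*x^2/(2*b))) x := by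
        have := (hasDerivAt_pow 3 x).div_const (2*b)
        simpa using this.fun_neg
      exact hp.mul he
    have h2 : HasDerivAt (fun x : ℝ => 3/(4*b^2) * x * Real.exp (-b*x^2))
        (3/(4*b^2) * Real.exp (-b*x^2) + (3/(4*b^2) * x) * (Real.exp (-b*x^2) * (-b*(2*x)))) x := by
      have hp : HasDerivAt (fun x : ℝ => 3/(4*b^2) * x) (3/(4*b^2)) x := by
        simpa using (hasDerivAt_id x).const_mul (3/(4*b^2))
      exact hp.mul he
    have := h1.fun_sub h2
    refine this.congr_deriv ?_
    field_simp
    ring_nf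
  have htend : Tendsto G atTop (𝓝 0) := by
    have hexp : Tendsto (fun x : ℝ => Real.exp (-(1/2) * x)) atTop (𝓝 0) := by
      refine Real.tendsto_exp_comp_nhds_zero.mpr ?_
      exact Tendsto.const_mul_atTop_of_neg (by norm_num) tendsto_id
    have t3 : Tendsto (fun x : ℝ => x^3 * Real.exp (-b*x^2)) atTop (𝓝 0) := by
      refine ((rpow_mul_exp_neg_mul_sq_isLittleO_exp_neg hb 3).tendsto_zero_of_tendsto hexp).congr' ?_
      filter_upwards [eventually_gt_atTop (0:ℝ)] with x hx
      norm_cast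
    have t1 : Tendsto (fun x : ℝ => x * Real.exp (-b*x^2)) atTop (𝓝 0) := by
      refine ((rpow_mul_exp_neg_mul_sq_isLittleO_exp_neg hb 1).tendsto_zero_of_tendsto hexp).congr' ?_
      filter_upwards [eventually_gt_atTop (0:ℝ)] with x hx
      rw [Real.rpow_one]
    have := ((t3.const_mul (-(1/(2*b)))).sub (t1.const_mul (3/(4*b^2))))
    simp only [mul_zero, sub_zero, zero_sub, neg_zero] at this
    refine this.congr (fun x => ?_)
    simp only [hG]
    ring
  have key : ∫ x in Ioi (0:ℝ),
      (Real.exp (-b * x^2) * x^4 - 3/(4*b^2) * Real.exp (-b * x^2)) = 0 - G 0 := by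
    exact integral_Ioi_of_hasDerivAt_of_tendsto' hderiv
      (hint4.sub (hint0.const_mul _)) htend
  have hG0 : G 0 = 0 := by simp [hG]
  rw [integral_sub hint4 (hint0.const_mul _)] at key
  rw [integral_const_mul] at key
  have hgauss : ∫ x in Ioi (0:ℝ), Real.exp (-b * x^2) = Real.sqrt (π / b) / 2 :=
    integral_gaussian_Ioi b
  rw [hgauss, hG0] at key
  have h2 : (3:ℝ)/(4*b^2) * (Real.sqrt (π/b) / 2) = 3/(8*b^2) * Real.sqrt (π/b) := by ring
  linarith [key, h2]


lemma sin_lb {φ : ℝ} (h1 : π/3 ≤ φ) (h2 : φ ≤ 2*π/3) : Real.sqrt 3 / 2 ≤ Real.sin φ := by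
  rcases le_or_gt φ (π/2) with h | h
  · have := Real.strictMonoOn_sin.monotoneOn (a := π/3) (b := φ)
      ⟨by linarith [pi_pos], by linarith [pi_pos]⟩ ⟨by linarith [pi_pos], h⟩ h1
    simpa [Real.sin_pi_div_three] using this
  · have hs : Real.sin φ = Real.sin (π - φ) := (Real.sin_pi_sub φ).symm
    rw [hs]
    have := Real.strictMonoOn_sin.monotoneOn (a := π/3) (b := π - φ)
      ⟨by linarith [pi_pos], by linarith [pi_pos]⟩ ⟨by linarith [pi_pos], by linarith⟩
      (by linarith)
    simpa [Real.sin_pi_div_three] using this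

lemma cos_ub {φ : ℝ} (h1 : π/3 ≤ φ) (h2 : φ ≤ 2*π/3) :
    Real.cos φ ≤ 1/2 ∧ -(1/2) ≤ Real.cos φ := by
  constructor
  · have := Real.strictAntiOn_cos.antitoneOn (a := π/3) (b := φ)
      ⟨by linarith [pi_pos], by linarith [pi_pos]⟩
      ⟨by linarith [pi_pos], by linarith [pi_pos]⟩ h1
    simpa [Real.cos_pi_div_three] using this
  · have := Real.strictAntiOn_cos.antitoneOn (a := φ) (b := 2*π/3)
      ⟨by linarith [pi_pos], by linarith [pi_pos]⟩
      ⟨by linarith [pi_pos], by linarith [pi_pos]⟩ h2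
    have h23 : Real.cos (2*π/3) = -(1/2) := by
      rw [show (2*π/3) = π - π/3 by ring, Real.cos_pi_sub, Real.cos_pi_div_three]
    linarith [this, h23.symm ▸ this]

lemma csc5 : (∫ φ in (π/3)..(2*π/3), (Real.sin φ ^ 5)⁻¹)
    = 17/18 + 3/8 * Real.log 3 := by
  have hpi : (0:ℝ) < π := pi_pos
  set F : ℝ → ℝ := fun φ => -Real.cos φ / (4 * Real.sin φ ^ 4)
      - 3 * Real.cos φ / (8 * Real.sin φ ^ 2)
      + 3/16 * (Real.log (1 - Real.cos φ) - Real.log (1 + Real.cos φ)) with hF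
  have hle : π/3 ≤ 2*π/3 := by linarith
  have hderiv : ∀ φ ∈ Set.uIcc (π/3) (2*π/3),
      HasDerivAt F ((Real.sin φ ^ 5)⁻¹) φ := by
    intro φ hφ
    rw [Set.uIcc_of_le hle] at hφ
    obtain ⟨h1, h2⟩ := hφ
    have hs : Real.sqrt 3 / 2 ≤ Real.sin φ := sin_lb h1 h2
    have hs0 : 0 < Real.sin φ := lt_of_lt_of_le (by positivity) hs
    have hsne : Real.sin φ ≠ 0 := ne_of_gt hs0
    obtain ⟨hc1, hc2⟩ := cos_ub h1 h2
    have hm : (0:ℝ) < 1 - Real.cos φ := by linarith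
    have hp : (0:ℝ) < 1 + Real.cos φ := by linarith
    have dcos : HasDerivAt Real.cos (-Real.sin φ) φ := Real.hasDerivAt_cos φ
    have dsin : HasDerivAt Real.sin (Real.cos φ) φ := Real.hasDerivAt_sin φ
    have d1 : HasDerivAt (fun x => -Real.cos x / (4 * Real.sin x ^ 4))
        ((Real.sin φ * (4 * Real.sin φ ^ 4) - (-Real.cos φ) * (4 * (4 * Real.sin φ ^ 3 * Real.cos φ)))
          / (4 * Real.sin φ ^ 4) ^ 2) φ := by
      have dncos : HasDerivAt (fun x => -Real.cos x) (Real.sin φ) φ := by simpa using dcos.fun_neg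
      exact HasDerivAt.div dncos (((dsin.pow 4).const_mul 4)) (by positivity)
    have d2 : HasDerivAt (fun x => 3 * Real.cos x / (8 * Real.sin x ^ 2))
        ((3 * -Real.sin φ * (8 * Real.sin φ ^ 2) - (3 * Real.cos φ) * (8 * (2 * Real.sin φ ^ 1 * Real.cos φ)))
          / (8 * Real.sin φ ^ 2) ^ 2) φ := by
      exact HasDerivAt.div (dcos.const_mul 3) (((dsin.pow 2).const_mul 8)) (by positivity)
    have d3 : HasDerivAt (fun x => Real.log (1 - Real.cos x)) (Real.sin φ / (1 - Real.cos φ)) φ := by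
      have : HasDerivAt (fun x => 1 - Real.cos x) (Real.sin φ) φ := by
        simpa using (hasDerivAt_const φ (1:ℝ)).fun_sub dcos
      simpa using this.log (ne_of_gt hm)
    have d4 : HasDerivAt (fun x => Real.log (1 + Real.cos x)) (-Real.sin φ / (1 + Real.cos φ)) φ := by
      have : HasDerivAt (fun x => 1 + Real.cos x) (-Real.sin φ) φ := by
        simpa using (hasDerivAt_const φ (1:ℝ)).fun_add dcos
      simpa using this.log (ne_of_gt hp)
    have := (d1.fun_sub d2).fun_add (((d3.fun_sub d4).const_mul (3/16)))
    refine this.congr_deriv ?_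
    have hpy : Real.cos φ ^ 2 = 1 - Real.sin φ ^ 2 := by
      nlinarith [Real.sin_sq_add_cos_sq φ]
    field_simp
    linear_combination ((512 + 384*Real.sin φ^2 + 192*Real.sin φ^4)
      - (512 + 384*Real.sin φ^2) * Real.cos φ^2) * hpy
  have hcont : IntervalIntegrable (fun φ => (Real.sin φ ^ 5)⁻¹) volume (π/3) (2*π/3) := by
    apply ContinuousOn.intervalIntegrable
    apply ContinuousOn.inv₀
    · exact (continuous_sin.pow 5).continuousOn
    · intro x hx
      rw [Set.uIcc_of_le hle] at hx
      have h := sin_lb hx.1 hx.2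
      have : (0:ℝ) < Real.sin x := lt_of_lt_of_le (by positivity) h
      positivity
  rw [intervalIntegral.integral_eq_sub_of_hasDerivAt hderiv hcont]
  have s3 : Real.sin (π/3) = Real.sqrt 3 / 2 := Real.sin_pi_div_three
  have c3 : Real.cos (π/3) = 1/2 := Real.cos_pi_div_three
  have s23 : Real.sin (2*π/3) = Real.sqrt 3 / 2 := by
    rw [show (2*π/3) = π - π/3 by ring, Real.sin_pi_sub, s3]
  have c23 : Real.cos (2*π/3) = -(1/2) := by
    rw [show (2*π/3) = π - π/3 by ring, Real.cos_pi_sub, c3]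
  have h3 : Real.sqrt 3 ^ 2 = 3 := Real.sq_sqrt (by norm_num)
  have h4 : (Real.sqrt 3 / 2)^4 = 9/16 := by
    rw [div_pow, show (Real.sqrt 3)^4 = ((Real.sqrt 3)^2)^2 by ring, h3]; norm_num
  have h2 : (Real.sqrt 3 / 2)^2 = 3/4 := by rw [div_pow, h3]; norm_num
  have e1 : Real.log (3/2) = Real.log 3 - Real.log 2 := by
    rw [Real.log_div (by norm_num) (by norm_num)]
  have e2 : Real.log (1/2) = -Real.log 2 := by rw [one_div, Real.log_inv]
  simp only [hF, s23, c23, s3, c3, h4, h2]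
  norm_num [e1, e2]
  ring

theorem stmt_8 (l : ℝ) (hl : 0 < l) :
    l * ∫ r in Set.Ioi (0:ℝ), ∫ φ in (π/3)..(2*π/3),
        Real.exp (-(l / Real.sqrt 3) * r^2 * Real.sin φ ^ 2) * r^4
      = (27 * Real.log 3 + 68) * Real.sqrt (π * Real.sqrt 3)
          / (64 * l ^ ((3:ℝ)/2)) := by
  have hpi : (0:ℝ) < π := pi_pos
  have h3p : (0:ℝ) < Real.sqrt 3 := by positivity
  set a : ℝ := l / Real.sqrt 3 with ha_def
  have ha : 0 < a := by positivity
  have hle : π/3 ≤ 2*π/3 := by linarith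
  set f : ℝ → ℝ → ℝ := fun r φ => Real.exp (-a * r^2 * Real.sin φ ^ 2) * r^4 with hf
  -- step 1: interval integral = set integral over Ioc
  have step1 : ∀ r : ℝ, (∫ φ in (π/3)..(2*π/3), f r φ)
      = ∫ φ in Ioc (π/3) (2*π/3), f r φ := fun r => intervalIntegral.integral_of_le hle
  -- integrability on product
  have hgint : IntegrableOn (fun r : ℝ => Real.exp (-(3/4*a) * r^2) * r^4) (Ioi 0) := by
    have := integrableOn_rpow_mul_exp_neg_mul_sq (b := 3/4*a) (by positivity) (s := 4) (by norm_num)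
    refine this.congr_fun (fun x hx => ?_) measurableSet_Ioi
    rw [← Real.rpow_natCast x 4]
    ring_nf
  haveI : IsFiniteMeasure (volume.restrict (Ioc (π/3) (2*π/3))) := by
    constructor
    rw [Measure.restrict_apply_univ, Real.volume_Ioc]
    exact ENNReal.ofReal_lt_top
  have hprodInt : Integrable (Function.uncurry f)
      ((volume.restrict (Ioi (0:ℝ))).prod (volume.restrict (Ioc (π/3) (2*π/3)))) := by
    have hmeas : AEStronglyMeasurable (Function.uncurry f)
        ((volume.restrict (Ioi (0:ℝ))).prod (volume.restrict (Ioc (π/3) (2*π/3)))) := by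
      apply Continuous.aestronglyMeasurable
      exact (Real.continuous_exp.comp (((continuous_const.mul (continuous_fst.pow 2)).mul
        ((Real.continuous_sin.comp continuous_snd).pow 2)))).mul (continuous_fst.pow 4)
    have hbd : Integrable (fun p : ℝ × ℝ => Real.exp (-(3/4*a) * p.1^2) * p.1^4)
        ((volume.restrict (Ioi (0:ℝ))).prod (volume.restrict (Ioc (π/3) (2*π/3)))) := by
      have := hgint.mul_prod (integrable_const (1:ℝ)
        (μ := volume.restrict (Ioc (π/3) (2*π/3))))
      simpa using this
    refine hbd.mono' hmeas ?_
    rw [Measure.prod_restrict]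
    filter_upwards [ae_restrict_mem (measurableSet_Ioi.prod measurableSet_Ioc)] with p hp
    obtain ⟨hp1, hp2⟩ := hp
    have hs : Real.sqrt 3 / 2 ≤ Real.sin p.2 := sin_lb hp2.1.le hp2.2
    have hs2 : 3/4 ≤ Real.sin p.2 ^ 2 := by
      have h3 : Real.sqrt 3 ^ 2 = 3 := Real.sq_sqrt (by norm_num)
      nlinarith
    have key : Real.exp (-a * p.1^2 * Real.sin p.2 ^ 2) ≤ Real.exp (-(3/4*a) * p.1^2) := by
      apply Real.exp_le_exp.2
      have := mul_le_mul_of_nonneg_left hs2 (by positivity : (0:ℝ) ≤ a * p.1^2)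
      nlinarith
    have : ‖f p.1 p.2‖ = Real.exp (-a * p.1^2 * Real.sin p.2 ^ 2) * p.1^4 := by
      rw [hf, Real.norm_eq_abs, abs_of_nonneg (by positivity)]
    rw [Function.uncurry, this]
    have h4 : (0:ℝ) ≤ p.1 ^ 4 := by positivity
    nlinarith [Real.exp_pos (-(3/4*a) * p.1^2)]
  -- swap
  have swap : (∫ r in Ioi (0:ℝ), ∫ φ in Ioc (π/3) (2*π/3), f r φ)
      = ∫ φ in Ioc (π/3) (2*π/3), ∫ r in Ioi (0:ℝ), f r φ :=
    integral_integral_swap hprodInt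
  -- inner integral
  set C : ℝ := 3 * Real.sqrt π / (8 * a^2 * Real.sqrt a) with hC
  have inner : ∀ φ ∈ Ioc (π/3) (2*π/3),
      (∫ r in Ioi (0:ℝ), f r φ) = C * (Real.sin φ ^ 5)⁻¹ := by
    intro φ hφ
    have hs : Real.sqrt 3 / 2 ≤ Real.sin φ := sin_lb hφ.1.le hφ.2
    have hs0 : 0 < Real.sin φ := lt_of_lt_of_le (by positivity) hs
    have hb : 0 < a * Real.sin φ ^ 2 := by positivity
    have e1 : (∫ r in Ioi (0:ℝ), f r φ)
        = ∫ r in Ioi (0:ℝ), Real.exp (-(a * Real.sin φ ^ 2) * r^2) * r^4 := by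
      simp only [hf]
      congr 1
      ext r
      congr 2
      ring
    rw [e1, moment4 hb]
    have hsq : Real.sqrt (π / (a * Real.sin φ ^ 2))
        = Real.sqrt π / (Real.sqrt a * Real.sin φ) := by
      rw [Real.sqrt_div hpi.le, Real.sqrt_mul ha.le, Real.sqrt_sq hs0.le]
    rw [hsq, hC]
    have hsa : 0 < Real.sqrt a := Real.sqrt_pos.2 ha
    field_simp
  have step3 : (∫ φ in Ioc (π/3) (2*π/3), ∫ r in Ioi (0:ℝ), f r φ)
      = C * ∫ φ in Ioc (π/3) (2*π/3), (Real.sin φ ^ 5)⁻¹ := by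
    rw [setIntegral_congr_fun measurableSet_Ioc inner, integral_const_mul]
  have step4 : (∫ φ in Ioc (π/3) (2*π/3), (Real.sin φ ^ 5)⁻¹)
      = 17/18 + 3/8 * Real.log 3 := by
    rw [← intervalIntegral.integral_of_le hle, csc5]
  -- assemble
  have lhs_eq : l * ∫ r in Set.Ioi (0:ℝ), ∫ φ in (π/3)..(2*π/3),
        Real.exp (-(l / Real.sqrt 3) * r^2 * Real.sin φ ^ 2) * r^4
      = l * (C * (17/18 + 3/8 * Real.log 3)) := by
    rw [show (∫ r in Set.Ioi (0:ℝ), ∫ φ in (π/3)..(2*π/3),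
        Real.exp (-(l / Real.sqrt 3) * r^2 * Real.sin φ ^ 2) * r^4)
        = ∫ r in Ioi (0:ℝ), ∫ φ in Ioc (π/3) (2*π/3), f r φ from by
      refine setIntegral_congr_fun measurableSet_Ioi (fun r _ => ?_)
      exact step1 r]
    rw [swap, step3, step4]
  rw [lhs_eq]
  -- final algebra
  have hl32 : l ^ ((3:ℝ)/2) = l * Real.sqrt l := by
    rw [Real.sqrt_eq_rpow, show (3:ℝ)/2 = 1 + 1/2 by norm_num, Real.rpow_add hl, Real.rpow_one]
  have ha2 : a^2 = l^2 / 3 := by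
    rw [ha_def, div_pow, Real.sq_sqrt (by norm_num : (0:ℝ) ≤ 3)]
  have hsa : Real.sqrt a = Real.sqrt l / Real.sqrt (Real.sqrt 3) := by
    rw [ha_def, Real.sqrt_div hl.le]
  rw [hl32, Real.sqrt_mul hpi.le, hC, ha2, hsa]
  have hsl : (0:ℝ) < Real.sqrt l := Real.sqrt_pos.2 hl
  have hss3 : (0:ℝ) < Real.sqrt (Real.sqrt 3) := Real.sqrt_pos.2 h3p
  field_simp
  ring
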